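/- Define δ₂ as above and δ₃(u,c,p,m) := -c^{2m-1}u² - 2(c^{2m-1} - cp + c^{2m}p)u + ((2c + c² - 2c^{2m} - c^{2m+1})p - c^{2m-1}). Assume m ≥ 1, c ∈ (0,1), p ∈ [p_*(m), 1). Then δ₃(u,c,p,m) ≥ 0 for all u ∈ [-1, -c]. -/

import Mathlib

open Real

lemma cubic_le_exp {x : ℝ} (hx : 0 ≤ x) : 1 + x + x^2/2 + x^3/6 ≤ Real.exp x := by
  have h := Real.sum_le_exp_of_nonneg hx 4
  simp [Finset.sum_range_succ, Nat.factorial] at h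
  linarith

lemma log_pade {c : ℝ} (hc0 : 0 < c) (hc1 : c ≤ 1) : 2*(1-c)/(1+c) ≤ -Real.log c := by
  have key : Real.log c + 4/(1+c) ≤ 2 := by
    set f : ℝ → ℝ := fun x => Real.log x + 4/(1+x) with hf
    have hder : ∀ x ∈ Set.Icc c 1, HasDerivAt f (1/x - 4/(1+x)^2) x := by
      intro x hx
      have hx0 : 0 < x := lt_of_lt_of_le hc0 hx.1
      have h1 : HasDerivAt Real.log x⁻¹ x := Real.hasDerivAt_log (ne_of_gt hx0)
      have h2 : HasDerivAt (fun y : ℝ => 4/(1+y)) ((0*(1+x) - 4*1)/(1+x)^2) x := by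
        have h3 : HasDerivAt (fun y : ℝ => 1+y) 1 x := by
          simpa using (hasDerivAt_id x).const_add 1
        exact (hasDerivAt_const x (4:ℝ)).div h3 (by nlinarith)
      have h4 := h1.add h2
      rw [show 1/x - 4/(1+x)^2 = x⁻¹ + (0*(1+x) - 4*1)/(1+x)^2 by ring]
      exact h4
    have hmono : MonotoneOn f (Set.Icc c 1) := by
      apply monotoneOn_of_deriv_nonneg (convex_Icc c 1)
      · exact ContinuousOn.add (Real.continuousOn_log.mono (by
          intro x hx; exact ne_of_gt (lt_of_lt_of_le hc0 hx.1))) (by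
          apply ContinuousOn.div continuousOn_const (by fun_prop)
          intro x hx; nlinarith [hx.1, lt_of_lt_of_le hc0 hx.1])
      · intro x hx
        rw [interior_Icc] at hx
        exact ((hder x ⟨hx.1.le, hx.2.le⟩).differentiableAt).differentiableWithinAt
      · intro x hx
        rw [interior_Icc] at hx
        have hx0 : 0 < x := lt_of_lt_of_le hc0 hx.1.le
        rw [(hder x ⟨hx.1.le, hx.2.le⟩).deriv]
        have he : 1/x - 4/(1+x)^2 = (1-x)^2/(x*(1+x)^2) := by
          field_simp; ring
        rw [he]
        positivity
    have h5 := hmono (Set.mem_Icc.2 ⟨le_refl c, hc1⟩) (Set.mem_Icc.2 ⟨hc1, le_refl 1⟩) hc1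
    simp [hf] at h5
    norm_num at h5
    linarith
  have h1c : (0:ℝ) < 1 + c := by linarith
  rw [div_le_iff₀ h1c]
  have h6 : 4/(1+c) ≤ 2 - Real.log c := by linarith
  rw [div_le_iff₀ h1c] at h6
  nlinarith [h6]

lemma G_nonneg (q a : ℝ) (hq0 : 0 ≤ q) (hq1 : q ≤ 1) (ha : 0 ≤ a) :
    0 ≤ 6*q*(1-q)*(2-q)^3 + 12*q*(1-q)*(2-q)^2*(1-2*q)*a
      + 6*q^2*(2-q)*(6*q-2-q^2)*a^2 + 8*q^3*(1+q)*a^3 := by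
  have hq1' : (0:ℝ) ≤ 1 - q := by linarith
  have h2q : (0:ℝ) ≤ 2 - q := by linarith
  have hEterm : (0:ℝ) ≤ 8*q^3*(1+q)*a^3 := by
    have h3 : (0:ℝ) ≤ q^3 := by positivity
    have h4 : (0:ℝ) ≤ a^3 := by positivity
    have h5 : (0:ℝ) ≤ 1 + q := by linarith
    nlinarith [mul_nonneg (mul_nonneg h3 h5) h4]
  rcases eq_or_lt_of_le hq0 with h0 | hqpos
  · rw [← h0]; norm_num
  · rcases le_or_gt (2 + q^2 - 6*q) 0 with hW | hW
    · rcases le_or_gt q (1/2) with hhalf | hhalf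
      · have hB : (0:ℝ) ≤ 1 - 2*q := by linarith
        have hA : (0:ℝ) ≤ 6*q^2*(2-q)*(6*q-2-q^2) := by
          have h6 : (0:ℝ) ≤ 6*q - 2 - q^2 := by linarith
          positivity
        nlinarith [mul_nonneg (mul_nonneg (mul_nonneg (mul_nonneg hq0 hq1') h2q) (mul_nonneg h2q h2q)) (le_of_lt hqpos),
          mul_nonneg hA (sq_nonneg a), hEterm,
          mul_nonneg (mul_nonneg (mul_nonneg (mul_nonneg (mul_nonneg hq0 hq1') h2q) (mul_nonneg h2q hB)) ha) hq0]
      · have hh : (0:ℝ) ≤ 3*q^3 - 2*q^2 + 3*q - 1 := by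
          nlinarith [mul_nonneg (mul_nonneg (by linarith : (0:ℝ) ≤ 2*q-1) (by linarith : (0:ℝ) ≤ 2*q-1)) (by linarith : (0:ℝ) ≤ 2*q-1), sq_nonneg (2*q-1), hqpos.le]
        nlinarith [mul_nonneg (mul_nonneg (mul_nonneg hq0 hq1') h2q) (sq_nonneg ((2-q)+(1-2*q)*a)),
          mul_nonneg (mul_nonneg (mul_nonneg hq0 h2q) hh) (sq_nonneg a), hEterm]
    · have hf1 : (0:ℝ) ≤ 2-8*q+13*q^2-4*q^3 := by
        nlinarith [sq_nonneg (9*q-4), mul_nonneg (mul_nonneg hq0 hq0) hq1']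
      have hf2 : (0:ℝ) ≤ 8+116*q-48*q^2+6*q^3 := by
        nlinarith [mul_nonneg hq0 hq1', mul_nonneg (mul_nonneg hq0 hq0) hq0]
      have hT1 : (0:ℝ) ≤ 4*q*(6*q*(1-q)*(2-q)^3) := by
        nlinarith [mul_nonneg (mul_nonneg (mul_nonneg (mul_nonneg hq0 hq0) hq1') h2q) (mul_nonneg h2q h2q)]
      have hT2 : (0:ℝ) ≤ (6*q^2*(2-q)*(2+q^2-6*q)) * (a*(q*a-2)^2) := by
        have h7 : (0:ℝ) ≤ 6*q^2*(2-q)*(2+q^2-6*q) := by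
          have := hW.le
          positivity
        exact mul_nonneg h7 (mul_nonneg ha (sq_nonneg _))
      have hT3 : (0:ℝ) ≤ 24*q^2*(2-q)*(2-8*q+13*q^2-4*q^3)*a :=
        mul_nonneg (mul_nonneg (mul_nonneg (by positivity) h2q) hf1) ha
      have hT4 : (0:ℝ) ≤ q^4*(8+116*q-48*q^2+6*q^3)*a^3 :=
        mul_nonneg (mul_nonneg (by positivity) hf2) (by positivity)
      nlinarith [hT1, hT2, hT3, hT4, hqpos]

lemma core_poly (c a : ℝ) (hc0 : 0 ≤ c) (hc1 : c ≤ 1) (ha : 0 ≤ a) :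
    6*(a^2+4*a+2)*(1-c)^2*(1+c)^3 ≤
      (2-c)*(6*(1-c)*(1+c)^3 + 12*a*(1-c)*(1+c)^2 + 12*a^2*(1-c)^2*(1+c) + 8*a^3*(1-c)^3) := by
  have h := G_nonneg (1-c) a (by linarith) (by linarith) ha
  nlinarith [h]

set_option maxHeartbeats 2000000 in
/-- `δ₃(u,c,p,m) ≥ 0` for `u ∈ [-1,-c]`, `c ∈ (0,1)`, `m ≥ 1`, `p ∈ [p_*(m), 1)`. -/
theorem delta3_nonneg (u c p m : ℝ) (hu : u ∈ Set.Icc (-1 : ℝ) (-c))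
    (hc : c ∈ Set.Ioo (0 : ℝ) 1) (hm : 1 ≤ m)
    (hp : (2 * m + 1 - Real.sqrt (4 * (m - 1) * (m + 2) + 1)) / (4 * (2 * m - 1)) ≤ p)
    (hp1 : p < 1) :
    0 ≤ -c ^ (2 * m - 1) * u ^ 2
        - 2 * (c ^ (2 * m - 1) - c * p + c ^ (2 * m) * p) * u
        + ((2 * c + c ^ 2 - 2 * c ^ (2 * m) - c ^ (2 * m + 1)) * p - c ^ (2 * m - 1)) := by
  obtain ⟨hu1, huc⟩ := hu
  obtain ⟨hc0, hc1⟩ := hc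
  have hs1 : (1:ℝ) ≤ 2*m - 1 := by linarith
  obtain ⟨a, ha_def⟩ : ∃ x : ℝ, x = 2*m - 2 := ⟨_, rfl⟩
  have ha0 : 0 ≤ a := by rw [ha_def]; linarith
  -- sqrt facts
  set r := Real.sqrt (4 * (m - 1) * (m + 2) + 1) with hr_def
  have hr0 : 0 ≤ r := Real.sqrt_nonneg _
  have hrsq : r^2 = 4 * (m - 1) * (m + 2) + 1 := Real.sq_sqrt (by nlinarith)
  -- lower bound on p : 1 ≤ (a^2+4a+2) * p
  have hsr : (2*m-1) * r ≤ (2*m-1)^2 + 2*(2*m-1) - 2 := by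
    have h1 : ((2*m-1)*r)^2 = (2*m-1)^2 * (4*(m-1)*(m+2)+1) := by
      rw [mul_pow, hrsq]
    have h2 : ((2*m-1)*r)^2 ≤ ((2*m-1)^2 + 2*(2*m-1) - 2)^2 := by
      rw [h1]; nlinarith [sq_nonneg (2*m-2)]
    have h3 : 0 ≤ (2*m-1)*r := mul_nonneg (by linarith) hr0
    have h4 : (0:ℝ) ≤ (2*m-1)^2 + 2*(2*m-1) - 2 := by nlinarith
    nlinarith [h2, h3, h4]
  have hK : (0:ℝ) < a^2 + 4*a + 2 := by positivity
  have hplow : 1 ≤ (a^2 + 4*a + 2) * p := by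
    have hP4 : (0:ℝ) < 4*(2*m-1) := by linarith
    have hPstar : 1 ≤ (a^2 + 4*a + 2) * ((2*m+1 - r)/(4*(2*m-1))) := by
      rw [← mul_div_assoc, le_div_iff₀ hP4]
      have h2 : ((2*m+1) - r) * ((2*m+1) + r) = 8 := by
        have : ((2*m+1) - r) * ((2*m+1) + r) = (2*m+1)^2 - r^2 := by ring
        rw [this, hrsq]; ring
      have h2' : (a^2 + 4*a + 2) * (((2*m+1) - r) * ((2*m+1) + r)) = (a^2 + 4*a + 2) * 8 := by
        rw [h2]
      have hrpos : (0:ℝ) < (2*m+1) + r := by nlinarith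
      have h4 : 4*(2*m-1)*((2*m+1) + r) ≤ 8*((a^2 + 4*a + 2)) := by
        simp only [ha_def]
        nlinarith [hsr]
      nlinarith [h2', h4, hrpos, hP4]
    calc (1:ℝ) ≤ (a^2 + 4*a + 2) * ((2*m+1 - r)/(4*(2*m-1))) := hPstar
      _ ≤ (a^2 + 4*a + 2) * p := by
          apply mul_le_mul_of_nonneg_left _ hK.le
          exact hp
  have hp0 : 0 < p := by nlinarith [hplow, hK]
  -- rpow manipulations
  have hpow1 : c ^ (2*m) = c * c ^ (2*m-1) := by
    conv_lhs => rw [show (2*m : ℝ) = 1 + (2*m-1) by ring]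
    rw [Real.rpow_add hc0, Real.rpow_one]
  have hpow2 : c ^ (2*m+1) = c^2 * c ^ (2*m-1) := by
    conv_lhs => rw [show (2*m+1 : ℝ) = 2 + (2*m-1) by ring]
    rw [Real.rpow_add hc0]
    norm_num
  set T := c ^ (2*m-1 : ℝ) with hT_def
  have hT0 : 0 < T := Real.rpow_pos_of_pos hc0 _
  -- T ≤ c * (1/D)
  obtain ⟨X, hX_def⟩ : ∃ x : ℝ, x = a * (2*(1-c)/(1+c)) := ⟨_, rfl⟩
  have hX0 : 0 ≤ X := by
    rw [hX_def]
    apply mul_nonneg ha0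
    apply div_nonneg (by linarith) (by linarith)
  obtain ⟨D, hD_def⟩ : ∃ d : ℝ, d = 1 + X + X^2/2 + X^3/6 := ⟨_, rfl⟩
  have hD1 : (1:ℝ) ≤ D := by
    rw [hD_def]
    nlinarith [hX0, sq_nonneg X, pow_nonneg hX0 3]
  have hD0 : (0:ℝ) < D := by linarith
  have hTD : T * D ≤ c := by
    have hca : c ^ (a : ℝ) = Real.exp (a * Real.log c) := by
      rw [Real.rpow_def_of_pos hc0, mul_comm]
    have hY0 : 0 ≤ a * (-Real.log c) := by
      apply mul_nonneg ha0
      simp only [neg_nonneg]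
      exact Real.log_nonpos hc0.le hc1.le
    have hXY : X ≤ a * (-Real.log c) := by
      rw [hX_def]
      apply mul_le_mul_of_nonneg_left (log_pade hc0 hc1.le) ha0
    have hexpD : D ≤ Real.exp (a * (-Real.log c)) := by
      have e2 : X^2 ≤ (a * (-Real.log c))^2 := pow_le_pow_left₀ hX0 hXY 2
      have e3 : X^3 ≤ (a * (-Real.log c))^3 := pow_le_pow_left₀ hX0 hXY 3
      calc D ≤ 1 + (a * (-Real.log c)) + (a * (-Real.log c))^2/2 + (a * (-Real.log c))^3/6 := by
              rw [hD_def]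
              linarith [hXY, e2, e3]
        _ ≤ Real.exp (a * (-Real.log c)) := cubic_le_exp hY0
    have hcaD : c ^ (a:ℝ) * D ≤ 1 := by
      rw [hca]
      have : Real.exp (a * Real.log c) = (Real.exp (a * (-Real.log c)))⁻¹ := by
        rw [← Real.exp_neg]; ring_nf
      rw [this]
      rw [inv_mul_le_iff₀ (Real.exp_pos _), mul_one]
      exact hexpD
    have hsplit : T = c * c ^ (a:ℝ) := by
      rw [hT_def, show (2*m-1 : ℝ) = 1 + a by rw [ha_def]; ring, Real.rpow_add hc0, Real.rpow_one]
    calc T * D = c * (c ^ (a:ℝ) * D) := by rw [hsplit]; ring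
      _ ≤ c * 1 := by
          apply mul_le_mul_of_nonneg_left hcaD hc0.le
      _ = c := mul_one c
  have hTc : T ≤ c := by
    nlinarith [hTD, hD1, hT0]
  -- core inequality : (1-c)^2 ≤ p * (2-c) * (D - c)
  have hcore : (1-c)^2 ≤ p * ((2-c) * (D - c)) := by
    obtain ⟨W, hW_def⟩ : ∃ w : ℝ, w = 6*(1-c)*(1+c)^3 + 12*a*(1-c)*(1+c)^2 + 12*a^2*(1-c)^2*(1+c) + 8*a^3*(1-c)^3 := ⟨_, rfl⟩
    have h1c : (0:ℝ) < 1 + c := by linarith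
    have hW0 : 0 ≤ W := by
      rw [hW_def]
      have q1 : (0:ℝ) ≤ 1 - c := by linarith
      nlinarith [mul_nonneg q1 (pow_nonneg h1c.le 3), mul_nonneg (mul_nonneg ha0 q1) (sq_nonneg (1+c)),
        mul_nonneg (mul_nonneg (sq_nonneg a) (sq_nonneg (1-c))) h1c.le,
        pow_nonneg (mul_nonneg ha0 q1) 3]
    have hWD : (D - c) * (6*(1+c)^3) = W := by
      rw [hD_def, hX_def, hW_def]
      field_simp
      ring
    have hG := core_poly c a hc0.le hc1.le ha0
    have h8 : (a^2+4*a+2) * (p * ((2-c)*W)) ≥ (a^2+4*a+2) * (6*(1-c)^2*(1+c)^3) := by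
      have hq1 : ((a^2+4*a+2)*p) * ((2-c)*W) ≥ 1 * ((2-c)*W) := by
        apply mul_le_mul_of_nonneg_right hplow (mul_nonneg (by linarith) hW0)
      nlinarith [hq1, hG]
    have h9 : p * ((2-c)*W) ≥ 6*(1-c)^2*(1+c)^3 := le_of_mul_le_mul_left (by linarith [h8]) hK
    have h10 : (0:ℝ) < 6*(1+c)^3 := by positivity
    rw [← mul_le_mul_iff_of_pos_right h10]
    calc (1-c)^2 * (6*(1+c)^3) = 6*(1-c)^2*(1+c)^3 := by ring
      _ ≤ p * ((2-c)*W) := h9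
      _ = p * ((2-c) * ((D - c) * (6*(1+c)^3))) := by rw [hWD]
      _ = p * ((2-c) * (D-c)) * (6*(1+c)^3) := by ring
  -- endpoint at u = -c : E2 ≥ 0
  have hE2 : 0 ≤ p*c*(2-c)*(1-T) - T*(1-c)^2 := by
    have hf1 : p*c*(2-c)*(T*D) ≤ p*c*(2-c)*c := by
      apply mul_le_mul_of_nonneg_left hTD
      have : (0:ℝ) ≤ 2 - c := by linarith
      positivity
    have hf2 : (T*D)*(1-c)^2 ≤ c*(1-c)^2 :=
      mul_le_mul_of_nonneg_right hTD (sq_nonneg _)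
    have hf3 : 0 ≤ c*(p*((2-c)*(D-c)) - (1-c)^2) := mul_nonneg hc0.le (by linarith [hcore])
    have hDt : 0 ≤ (p*c*(2-c)*(1-T) - T*(1-c)^2) * D := by nlinarith [hf1, hf2, hf3]
    nlinarith [hDt, hD0]
  -- endpoint at u = -1 : E1 ≥ 0
  have hE1 : 0 ≤ c^2*p*(1-T) := by
    have : (0:ℝ) ≤ 1 - T := by linarith [hTc]
    positivity
  -- combine by concavity
  rw [hpow1, hpow2]
  have hcu : 0 ≤ -c - u := by linarith
  have hu1' : 0 ≤ u + 1 := by linarith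
  nlinarith [mul_nonneg hcu hE1, mul_nonneg hu1' hE2,
    mul_nonneg (mul_nonneg (mul_nonneg hT0.le hcu) hu1') (by linarith : (0:ℝ) ≤ 1-c),
    hc1, hc0.le]
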